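/- Let p : Fin m → Fin ℓ be a nonempty subword pattern (m ≥ 1) and k ≥ 1. Let a_p(n;k) be the number of k-ary words of length n avoiding p, and let a*_p(n;k) be the number of k-ary words σ of length n that quasi-avoid p, i.e., σ has exactly one occurrence of p and that occurrence is at position n − m. Then for all n ≥ 1, a*_p(n;k) = k·a_p(n−1;k) − a_p(n;k); equivalently, in ℚ[[x]], A*_p(x;k) = (k·x − 1)·A_p(x;k) + 1, where A*_p(x;k) = Σ_{n≥0} a*_p(n;k)·xⁿ and A_p(x;k) = Σ_{n≥0} a_p(n;k)·xⁿ. -/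

import Mathlib

/-- A word `σ : Fin n → Fin k` has an occurrence of the subword pattern `p : Fin m → Fin l`
at position `i` if `i + m ≤ n` and the corresponding letters are order-isomorphic to `p`. -/
def OccursAt {m l n k : ℕ} (p : Fin m → Fin l) (σ : Fin n → Fin k) (i : ℕ) : Prop :=
  ∃ h : i + m ≤ n, ∀ a b : Fin m,
    (σ ⟨i + a, lt_of_lt_of_le (Nat.add_lt_add_left a.isLt i) h⟩ <
      σ ⟨i + b, lt_of_lt_of_le (Nat.add_lt_add_left b.isLt i) h⟩) ↔ p a < p b

/-- `σ` avoids the subword pattern `p`. -/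
def AvoidsPat {m l n k : ℕ} (p : Fin m → Fin l) (σ : Fin n → Fin k) : Prop :=
  ∀ i : ℕ, ¬ OccursAt p σ i

/-- `σ` quasi-avoids `p`: it has exactly one occurrence of `p`, occupying the last `m`
positions, i.e. at position `n - m`. -/
def QuasiAvoids {m l n k : ℕ} (p : Fin m → Fin l) (σ : Fin n → Fin k) : Prop :=
  OccursAt p σ (n - m) ∧ ∀ i : ℕ, OccursAt p σ i → i = n - m

/-- The number of words `Fin n → Fin k` avoiding `p`. -/
noncomputable def aPat {m l : ℕ} (p : Fin m → Fin l) (n k : ℕ) : ℕ :=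
  Nat.card {σ : Fin n → Fin k // AvoidsPat p σ}

/-- The number of words `Fin n → Fin k` quasi-avoiding `p`. -/
noncomputable def aStarPat {m l : ℕ} (p : Fin m → Fin l) (n k : ℕ) : ℕ :=
  Nat.card {σ : Fin n → Fin k // QuasiAvoids p σ}

lemma occursAt_init {m l n k : ℕ} (p : Fin m → Fin l) (σ : Fin (n+1) → Fin k)
    (i : ℕ) (h : i + m ≤ n) : OccursAt p (Fin.init σ) i ↔ OccursAt p σ i := by
  constructor
  · rintro ⟨h', hab⟩
    refine ⟨by omega, fun a b => ?_⟩
    simpa [Fin.init, Fin.castSucc, Fin.castAdd, Fin.castLE] using hab a b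
  · rintro ⟨h', hab⟩
    refine ⟨h, fun a b => ?_⟩
    simpa [Fin.init, Fin.castSucc, Fin.castAdd, Fin.castLE] using hab a b

lemma avoid_init_iff {m l n k : ℕ} (p : Fin m → Fin l) (hm : 1 ≤ m)
    (σ : Fin (n+1) → Fin k) :
    AvoidsPat p (Fin.init σ) ↔ AvoidsPat p σ ∨ QuasiAvoids p σ := by
  constructor
  · intro hpre
    by_cases hA : AvoidsPat p σ
    · exact Or.inl hA
    · right
      simp only [AvoidsPat, not_forall, not_not] at hA
      obtain ⟨i, hi⟩ := hA
      have key : ∀ j : ℕ, OccursAt p σ j → j = (n+1) - m := by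
        intro j hj
        have hj' := hj.1
        have hjn : ¬ (j + m ≤ n) := by
          intro hle
          exact hpre j ((occursAt_init p σ j hle).mpr hj)
        omega
      have hi' := key i hi
      subst hi'
      exact ⟨hi, key⟩
  · rintro (hA | ⟨hocc, huniq⟩)
    · intro i hi
      exact hA i ((occursAt_init p σ i hi.1).mp hi)
    · intro i hi
      have h1 := hi.1
      have := huniq i ((occursAt_init p σ i h1).mp hi)
      obtain ⟨hle, _⟩ := hocc
      omega

lemma avoid_quasi_disjoint {m l n k : ℕ} (p : Fin m → Fin l) (σ : Fin n → Fin k) :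
    ¬ (AvoidsPat p σ ∧ QuasiAvoids p σ) := by
  rintro ⟨hA, hQ, _⟩
  exact hA _ hQ

def snocEquiv {m l n k : ℕ} (p : Fin m → Fin l) :
    {σ : Fin (n+1) → Fin k // AvoidsPat p (Fin.init σ)} ≃
      {τ : Fin n → Fin k // AvoidsPat p τ} × Fin k where
  toFun σ := (⟨Fin.init σ.1, σ.2⟩, σ.1 (Fin.last n))
  invFun x := ⟨Fin.snoc x.1.1 x.2, by rw [Fin.init_snoc]; exact x.1.2⟩
  left_inv σ := Subtype.ext (Fin.snoc_init_self σ.1)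
  right_inv x := by
    obtain ⟨⟨τ, hτ⟩, c⟩ := x
    refine Prod.ext (Subtype.ext ?_) ?_ <;> simp

lemma recursion {m l k : ℕ} (p : Fin m → Fin l) (hm : 1 ≤ m) (n : ℕ) :
    aStarPat p (n+1) k + aPat p (n+1) k = k * aPat p n k := by
  classical
  have hd : Disjoint (AvoidsPat p (n := n+1) (k := k)) (QuasiAvoids p) :=
    disjoint_iff_inf_le.mpr (fun σ h => (avoid_quasi_disjoint p σ h).elim)
  have e1 : {σ : Fin (n+1) → Fin k // AvoidsPat p (Fin.init σ)} ≃
      {σ : Fin (n+1) → Fin k // AvoidsPat p σ ∨ QuasiAvoids p σ} :=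
    Equiv.subtypeEquivRight (fun σ => avoid_init_iff p hm σ)
  have e2 := subtypeOrEquiv (AvoidsPat p (n := n+1) (k := k)) (QuasiAvoids p) hd
  have h1 : aPat p (n+1) k + aStarPat p (n+1) k = k * aPat p n k := by
    unfold aPat aStarPat
    rw [← Nat.card_sum, ← Nat.card_congr e2, ← Nat.card_congr e1,
      Nat.card_congr (snocEquiv p), Nat.card_prod]
    simp [Nat.card_eq_fintype_card, Nat.mul_comm]
  omega

lemma aPat_zero {m l k : ℕ} (p : Fin m → Fin l) (hm : 1 ≤ m) : aPat p 0 k = 1 := by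
  have hall : ∀ σ : Fin 0 → Fin k, AvoidsPat p σ := by
    rintro σ i ⟨h, -⟩; omega
  rw [aPat, Nat.card_congr (Equiv.subtypeUnivEquiv hall)]
  simp [Nat.card_eq_fintype_card]

lemma aStarPat_zero {m l k : ℕ} (p : Fin m → Fin l) (hm : 1 ≤ m) : aStarPat p 0 k = 0 := by
  have : IsEmpty {σ : Fin 0 → Fin k // QuasiAvoids p σ} := by
    refine ⟨fun x => ?_⟩
    obtain ⟨σ, h, -⟩ := x
    obtain ⟨hle, -⟩ := h
    omega
  rw [aStarPat, Nat.card_of_isEmpty]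

theorem stmt2 (m l k : ℕ) (hm : 1 ≤ m) (hk : 1 ≤ k) (p : Fin m → Fin l) :
    (∀ n : ℕ, 1 ≤ n → aStarPat p n k + aPat p n k = k * aPat p (n - 1) k) ∧
      (PowerSeries.mk fun n => (aStarPat p n k : ℚ)) =
        ((k : PowerSeries ℚ) * PowerSeries.X - 1) *
            (PowerSeries.mk fun n => (aPat p n k : ℚ)) + 1 := by
  have hrec : ∀ n : ℕ, 1 ≤ n → aStarPat p n k + aPat p n k = k * aPat p (n - 1) k := by
    rintro (_ | n) hn
    · omega
    · simpa using recursion p hm n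
  refine ⟨hrec, ?_⟩
  set A := (PowerSeries.mk fun n => (aPat p n k : ℚ)) with hA
  have hser : ((k : PowerSeries ℚ) * PowerSeries.X - 1) * A + 1 =
      PowerSeries.C (k : ℚ) * (PowerSeries.X * A) - A + 1 := by
    rw [map_natCast (PowerSeries.C (R := ℚ)) k]; ring
  rw [hser]
  ext n
  rw [map_add, map_sub, PowerSeries.coeff_C_mul]
  cases n with
  | zero =>
    simp [PowerSeries.coeff_zero_eq_constantCoeff, hA, aPat_zero p hm, aStarPat_zero p hm]
  | succ n =>
    have h := hrec (n+1) (by omega)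
    have hc : ((aStarPat p (n+1) k : ℚ)) + aPat p (n+1) k = k * aPat p n k := by
      exact_mod_cast congrArg (Nat.cast : ℕ → ℚ) h
    rw [PowerSeries.coeff_succ_X_mul]
    simp only [hA, PowerSeries.coeff_mk, PowerSeries.coeff_one]
    norm_num
    linarith
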